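/- arXiv:2505.18037 — 6 statements merged into one kernel-verified Lean document; each statement's English description precedes it below -/
import Mathlib

section
/- For any real p in (0,1) and any integer t ≥ 1, the sum ∑_{i=1}^{t} (i+1)·i·(σ_{i-1} - σ_i) ≤ 2·ς·p·t^{2-p}, where σ_i := ς·(i+1)^{-p} and ς > 0. -/
open Real

theorem stmt_1 (p ς : ℝ) (hp0 : 0 < p) (hp1 : p < 1) (hς : 0 < ς) (t : ℕ) (ht : 1 ≤ t)
    (σ : ℕ → ℝ) (hσ : ∀ i, σ i = ς * ((i : ℝ) + 1) ^ (-p)) :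
    ∑ i ∈ Finset.Icc 1 t, ((i : ℝ) + 1) * (i : ℝ) * (σ (i - 1) - σ i)
      ≤ 2 * ς * p * (t : ℝ) ^ (2 - p) := by
  have ht' : (1 : ℝ) ≤ (t : ℝ) := by exact_mod_cast ht
  have htpos : (0 : ℝ) < t := by linarith
  have hkey : ∀ i ∈ Finset.Icc 1 t,
      ((i : ℝ) + 1) * (i : ℝ) * (σ (i - 1) - σ i) ≤ 2 * ς * p * (t : ℝ) ^ (1 - p) := by
    intro i hi
    simp only [Finset.mem_Icc] at hi
    obtain ⟨hi1, hit⟩ := hi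
    set x : ℝ := (i : ℝ) with hxdef
    have hx1 : (1 : ℝ) ≤ x := by rw [hxdef]; exact_mod_cast hi1
    have hx0 : (0 : ℝ) < x := by linarith
    have hσ1 : σ (i - 1) = ς * x ^ (-p) := by
      rw [hσ]
      congr 2
      have : ((i - 1 : ℕ) : ℝ) = x - 1 := by
        push_cast [Nat.cast_sub hi1]; ring
      rw [this]; ring
    have hσ2 : σ i = ς * (x + 1) ^ (-p) := hσ i
    -- Bernoulli-type bound : (x+1)^(-p) ≥ x^(-p) - p * x^(-p) / x
    have hxp : (0 : ℝ) < x ^ (-p) := rpow_pos_of_pos hx0 _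
    have hu : (0 : ℝ) ≤ 1 / x := by positivity
    have hber : (1 + 1 / x) ^ p ≤ 1 + p * (1 / x) :=
      rpow_one_add_le_one_add_mul_self (by linarith) hp0.le hp1.le
    have h1pu : (0 : ℝ) < (1 + 1 / x) ^ p := rpow_pos_of_pos (by linarith) _
    have hinv : (1 + p * (1 / x))⁻¹ ≤ ((1 + 1 / x) ^ p)⁻¹ := by
      apply inv_anti₀ h1pu hber
    have hinv2 : 1 - p * (1 / x) ≤ (1 + p * (1 / x))⁻¹ := by
      rw [inv_eq_one_div, le_div_iff₀ (by positivity)]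
      nlinarith [sq_nonneg (p * (1 / x))]
    have hstep : 1 - p / x ≤ (1 + 1 / x) ^ (-p) := by
      rw [rpow_neg (by linarith : (0:ℝ) ≤ 1 + 1/x)]
      have := hinv2.trans hinv
      calc 1 - p / x = 1 - p * (1 / x) := by ring
        _ ≤ ((1 + 1 / x) ^ p)⁻¹ := this
    have hsplit : (x + 1) ^ (-p) = x ^ (-p) * (1 + 1 / x) ^ (-p) := by
      rw [← mul_rpow hx0.le (by positivity)]
      congr 1
      field_simp
    have hmain : x ^ (-p) - (x + 1) ^ (-p) ≤ x ^ (-p) * (p / x) := by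
      rw [hsplit]
      have : x ^ (-p) * (1 - p / x) ≤ x ^ (-p) * (1 + 1 / x) ^ (-p) :=
        mul_le_mul_of_nonneg_left hstep hxp.le
      nlinarith
    -- now the per-term bound
    have hx1p : x ^ (1 - p) = x * x ^ (-p) := by
      rw [show (1 : ℝ) - p = 1 + (-p) by ring, rpow_add hx0, rpow_one]
    have hxt : x ^ (1 - p) ≤ (t : ℝ) ^ (1 - p) :=
      rpow_le_rpow hx0.le (by rw [hxdef]; exact_mod_cast hit) (by linarith)
    calc (x + 1) * x * (σ (i - 1) - σ i)
        = (x + 1) * x * (ς * (x ^ (-p) - (x + 1) ^ (-p))) := by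
          rw [hσ1, hσ2]; ring
      _ ≤ (x + 1) * x * (ς * (x ^ (-p) * (p / x))) := by
          apply mul_le_mul_of_nonneg_left (mul_le_mul_of_nonneg_left hmain hς.le)
          nlinarith
      _ = ς * p * ((x + 1) * x ^ (-p)) := by field_simp
      _ ≤ ς * p * (2 * x * x ^ (-p)) := by
          apply mul_le_mul_of_nonneg_left _ (by positivity)
          apply mul_le_mul_of_nonneg_right (by linarith) hxp.le
      _ = 2 * ς * p * x ^ (1 - p) := by rw [hx1p]; ring
      _ ≤ 2 * ς * p * (t : ℝ) ^ (1 - p) := by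
          apply mul_le_mul_of_nonneg_left hxt (by positivity)
  calc ∑ i ∈ Finset.Icc 1 t, ((i : ℝ) + 1) * (i : ℝ) * (σ (i - 1) - σ i)
      ≤ (Finset.Icc 1 t).card • (2 * ς * p * (t : ℝ) ^ (1 - p)) :=
        Finset.sum_le_card_nsmul _ _ _ hkey
    _ = (t : ℝ) * (2 * ς * p * (t : ℝ) ^ (1 - p)) := by
        rw [Nat.card_Icc]; simp [nsmul_eq_mul]
    _ = 2 * ς * p * ((t : ℝ) * (t : ℝ) ^ (1 - p)) := by ring
    _ = 2 * ς * p * (t : ℝ) ^ (2 - p) := by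
        rw [show (2 : ℝ) - p = 1 + (1 - p) by ring, rpow_add htpos, rpow_one]
end

section
/- For any real p in (0,1) and integer t ≥ 1, if σ_i := ς·(i+1)^{-p} for some ς > 0, then ∑_{i=1}^{t}(i+1)·i·(σ_{i-1} - σ_i) / ((t+1)·t·σ_t) ≤ 2p. -/
open Real

lemma key_ineq (p : ℝ) (hp0 : 0 < p) (hp1 : p < 1) (x : ℝ) (hx : 1 ≤ x) :
    x ^ (-p) - (x + 1) ^ (-p) ≤ p * x ^ (-p) / x := by
  have hx0 : 0 < x := lt_of_lt_of_le one_pos hx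
  set s : ℝ := 1 / x with hs_def
  have hs0 : 0 < s := by positivity
  have hbern : (1 + s) ^ p ≤ 1 + p * s :=
    rpow_one_add_le_one_add_mul_self (by linarith) hp0.le hp1.le
  have h1s : (0:ℝ) < 1 + s := by linarith
  have hps : (0:ℝ) < 1 + p * s := by positivity
  have hinv : (1 + p * s)⁻¹ ≤ (1 + s) ^ (-p) := by
    rw [rpow_neg h1s.le]
    exact inv_anti₀ (by positivity) hbern
  have hinv2 : 1 - p * s ≤ (1 + p * s)⁻¹ := by
    rw [inv_eq_one_div, le_div_iff₀ hps]
    nlinarith [sq_nonneg (p * s)]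
  have hsplit : (x + 1) ^ (-p) = x ^ (-p) * (1 + s) ^ (-p) := by
    have hx1 : x + 1 = x * (1 + s) := by rw [hs_def]; field_simp
    rw [hx1, mul_rpow hx0.le h1s.le]
  have hxp : (0:ℝ) < x ^ (-p) := rpow_pos_of_pos hx0 _
  have : x ^ (-p) * (1 - p * s) ≤ (x + 1) ^ (-p) := by
    rw [hsplit]
    exact mul_le_mul_of_nonneg_left (le_trans hinv2 hinv) hxp.le
  have hfin : x ^ (-p) - (x + 1) ^ (-p) ≤ x ^ (-p) * (p * s) := by nlinarith
  calc x ^ (-p) - (x + 1) ^ (-p) ≤ x ^ (-p) * (p * s) := hfin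
    _ = p * x ^ (-p) / x := by rw [hs_def]; ring

theorem stmt_2 (p ς : ℝ) (hp0 : 0 < p) (hp1 : p < 1) (hς : 0 < ς) (t : ℕ) (ht : 1 ≤ t)
    (σ : ℕ → ℝ) (hσ : ∀ i, σ i = ς * ((i : ℝ) + 1) ^ (-p)) :
    (∑ i ∈ Finset.Icc 1 t, ((i : ℝ) + 1) * (i : ℝ) * (σ (i - 1) - σ i))
      / (((t : ℝ) + 1) * (t : ℝ) * σ t) ≤ 2 * p := by
  have ht0 : (0:ℝ) < t := by exact_mod_cast ht
  have ht1 : (1:ℝ) ≤ t := by exact_mod_cast ht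
  have hD : (0:ℝ) < ((t : ℝ) + 1) * (t : ℝ) * σ t := by
    rw [hσ]
    have : (0:ℝ) < ((t:ℝ)+1) ^ (-p) := rpow_pos_of_pos (by linarith) _
    positivity
  rw [div_le_iff₀ hD]
  -- bound each summand
  have hterm : ∀ i ∈ Finset.Icc 1 t, ((i : ℝ) + 1) * (i : ℝ) * (σ (i - 1) - σ i)
      ≤ 2 * ς * p * (t : ℝ) ^ (1 - p) := by
    intro i hi
    simp only [Finset.mem_Icc] at hi
    obtain ⟨hi1, hit⟩ := hi
    have hi1' : (1:ℝ) ≤ i := by exact_mod_cast hi1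
    have hi0 : (0:ℝ) < i := by linarith
    have hcast : ((i - 1 : ℕ) : ℝ) + 1 = (i : ℝ) := by
      have : (i - 1 : ℕ) + 1 = i := Nat.succ_pred_eq_of_pos hi1
      exact_mod_cast congrArg (Nat.cast : ℕ → ℝ) this
    have hσdiff : σ (i - 1) - σ i = ς * ((i:ℝ) ^ (-p) - ((i:ℝ) + 1) ^ (-p)) := by
      rw [hσ, hσ, hcast]; ring
    have hk := key_ineq p hp0 hp1 (i:ℝ) hi1'
    have h1 : ((i : ℝ) + 1) * (i : ℝ) * (σ (i - 1) - σ i)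
        ≤ ((i:ℝ) + 1) * (i:ℝ) * (ς * (p * (i:ℝ) ^ (-p) / i)) := by
      rw [hσdiff]
      have := mul_le_mul_of_nonneg_left hk hς.le
      have hpos : (0:ℝ) ≤ ((i:ℝ)+1) * (i:ℝ) := by positivity
      exact mul_le_mul_of_nonneg_left this hpos
    have h2 : ((i:ℝ) + 1) * (i:ℝ) * (ς * (p * (i:ℝ) ^ (-p) / i))
        = ς * p * (((i:ℝ) + 1) * (i:ℝ) ^ (-p)) := by
      field_simp
    have hxp : (0:ℝ) < (i:ℝ) ^ (-p) := rpow_pos_of_pos hi0 _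
    have h3 : ((i:ℝ) + 1) * (i:ℝ) ^ (-p) ≤ 2 * (i:ℝ) ^ (1 - p) := by
      have : (i:ℝ) ^ (1 - p) = (i:ℝ) * (i:ℝ) ^ (-p) := by
        rw [show (1 - p) = 1 + (-p) by ring, rpow_add hi0, rpow_one]
      rw [this]
      nlinarith
    have h4 : (i:ℝ) ^ (1 - p) ≤ (t:ℝ) ^ (1 - p) := by
      apply rpow_le_rpow hi0.le (by exact_mod_cast hit) (by linarith)
    calc ((i : ℝ) + 1) * (i : ℝ) * (σ (i - 1) - σ i)
        ≤ ς * p * (((i:ℝ) + 1) * (i:ℝ) ^ (-p)) := by rw [← h2]; exact h1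
      _ ≤ ς * p * (2 * (i:ℝ) ^ (1 - p)) := by
          apply mul_le_mul_of_nonneg_left h3 (by positivity)
      _ ≤ ς * p * (2 * (t:ℝ) ^ (1 - p)) := by
          apply mul_le_mul_of_nonneg_left (by linarith) (by positivity)
      _ = 2 * ς * p * (t : ℝ) ^ (1 - p) := by ring
  have hsum : (∑ i ∈ Finset.Icc 1 t, ((i : ℝ) + 1) * (i : ℝ) * (σ (i - 1) - σ i))
      ≤ (t : ℝ) * (2 * ς * p * (t : ℝ) ^ (1 - p)) := by
    have := Finset.sum_le_card_nsmul (Finset.Icc 1 t) _ _ hterm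
    have hcard : (Finset.Icc 1 t).card = t := by
      rw [Nat.card_Icc]; omega
    rw [hcard] at this
    simpa [nsmul_eq_mul] using this
  refine hsum.trans ?_
  rw [hσ]
  have htp : (0:ℝ) < (t:ℝ) + 1 := by linarith
  have hrw : 2 * p * (((t:ℝ) + 1) * (t:ℝ) * (ς * ((t:ℝ) + 1) ^ (-p)))
      = 2 * p * ς * (t:ℝ) * ((t:ℝ) + 1) ^ (1 - p) := by
    rw [show (1 - p) = 1 + (-p) by ring, rpow_add htp, rpow_one]; ring
  rw [hrw]
  have h5 : (t:ℝ) ^ (1 - p) ≤ ((t:ℝ) + 1) ^ (1 - p) :=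
    rpow_le_rpow ht0.le (by linarith) (by linarith)
  nlinarith [mul_le_mul_of_nonneg_left h5 (show (0:ℝ) ≤ 2 * p * ς * t by positivity)]
end

section
/- For any integer t ≥ 1 and real p ∈ (0,1/2], ∑_{i=1}^{t}(i+1)·i·(σ_{i-1} - σ_i)·σ_i ≤ 2p·ς²·t^{2(1-p)}, where σ_i := ς·(i+1)^{-p} and ς > 0. -/
open Real in
lemma key_diff {p : ℝ} (hp0 : 0 < p) (hp1 : p ≤ 1) {x : ℝ} (hx : 1 ≤ x) :
    x ^ (-p) - (x + 1) ^ (-p) ≤ p * x ^ (-(p + 1)) := by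
  have hx0 : 0 < x := lt_of_lt_of_le one_pos hx
  set s := x⁻¹ with hs
  have hs0 : 0 < s := inv_pos.mpr hx0
  have hxp : 0 < x ^ (-p) := rpow_pos_of_pos hx0 _
  have h1s : x + 1 = x * (1 + s) := by rw [mul_add, mul_one, mul_inv_cancel₀ hx0.ne']
  have hber : (1 + s) ^ p ≤ 1 + p * s :=
    rpow_one_add_le_one_add_mul_self (by linarith) hp0.le hp1
  have hps0 : 0 < 1 + p * s := by positivity
  have h1sp : 0 < (1 + s) ^ p := rpow_pos_of_pos (by linarith) _
  have hinv : 1 - p * s ≤ ((1 + s) ^ p)⁻¹ := by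
    have h2 : 1 - p * s ≤ (1 + p * s)⁻¹ := by
      nlinarith [sq_nonneg (p * s), mul_inv_cancel₀ hps0.ne', inv_pos.mpr hps0]
    exact h2.trans (inv_anti₀ h1sp hber)
  have hmain : x ^ (-p) * (1 - p * s) ≤ (x + 1) ^ (-p) := by
    rw [h1s, Real.mul_rpow hx0.le (by linarith),
      Real.rpow_neg (show (0:ℝ) ≤ 1 + s by linarith) p]
    exact mul_le_mul_of_nonneg_left hinv hxp.le
  have hpow : x ^ (-p) * s = x ^ (-(p + 1)) := by
    rw [hs, ← Real.rpow_neg_one x, ← Real.rpow_add hx0]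
    ring_nf
  nlinarith [hmain, hpow]

theorem stmt_3 (p ς : ℝ) (hp0 : 0 < p) (hp1 : p ≤ 1 / 2) (hς : 0 < ς) (t : ℕ) (ht : 1 ≤ t)
    (σ : ℕ → ℝ) (hσ : ∀ i, σ i = ς * ((i : ℝ) + 1) ^ (-p)) :
    ∑ i ∈ Finset.Icc 1 t, ((i : ℝ) + 1) * (i : ℝ) * (σ (i - 1) - σ i) * σ i
      ≤ 2 * p * ς ^ 2 * (t : ℝ) ^ (2 * (1 - p)) := by
  have h2p : (0:ℝ) ≤ 1 - 2 * p := by linarith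
  have ht1 : (1:ℝ) ≤ (t:ℝ) := by exact_mod_cast ht
  have ht0 : (0:ℝ) < (t:ℝ) := by linarith
  have hbound : ∀ i ∈ Finset.Icc 1 t,
      ((i : ℝ) + 1) * (i : ℝ) * (σ (i - 1) - σ i) * σ i
        ≤ 2 * p * ς ^ 2 * (t:ℝ) ^ (1 - 2 * p) := by
    intro i hi
    obtain ⟨hi1, hit⟩ := Finset.mem_Icc.mp hi
    have hx1 : (1:ℝ) ≤ (i:ℝ) := by exact_mod_cast hi1
    have hx0 : (0:ℝ) < (i:ℝ) := by linarith
    have hσ1 : σ (i - 1) = ς * (i:ℝ) ^ (-p) := by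
      rw [hσ]
      congr 2
      have h : ((i - 1 : ℕ) : ℝ) = (i:ℝ) - 1 := by
        push_cast [Nat.cast_sub hi1]; ring
      rw [h]; ring
    have hdiff : σ (i - 1) - σ i ≤ ς * (p * (i:ℝ) ^ (-(p + 1))) := by
      rw [hσ1, hσ, ← mul_sub]
      exact mul_le_mul_of_nonneg_left (key_diff hp0 (by linarith) hx1) hς.le
    have hbase : ((i:ℝ) + 1) ^ (-p) ≤ (i:ℝ) ^ (-p) :=
      Real.rpow_le_rpow_of_nonpos hx0 (by linarith) (by linarith)
    have hdnn : 0 ≤ σ (i - 1) - σ i := by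
      rw [hσ1, hσ]; nlinarith [hbase, hς.le]
    have hσile : σ i ≤ ς * (i:ℝ) ^ (-p) := by
      rw [hσ]; exact mul_le_mul_of_nonneg_left hbase hς.le
    have hσinn : 0 ≤ σ i := by rw [hσ]; positivity
    have step1 : ((i : ℝ) + 1) * (i : ℝ) * (σ (i - 1) - σ i) * σ i
        ≤ (2 * (i:ℝ)) * (i:ℝ) * (ς * (p * (i:ℝ) ^ (-(p + 1)))) * (ς * (i:ℝ) ^ (-p)) := by
      gcongr
      repeat' first | positivity | linarith
    have hxpow : (i:ℝ) * (i:ℝ) * ((i:ℝ) ^ (-(p + 1)) * (i:ℝ) ^ (-p)) = (i:ℝ) ^ (1 - 2 * p) := by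
      have h1 : (i:ℝ) ^ (-(p + 1)) * (i:ℝ) ^ (-p) = (i:ℝ) ^ (-(2 * p + 1)) := by
        rw [← Real.rpow_add hx0]; ring_nf
      have h2 : (i:ℝ) * (i:ℝ) = (i:ℝ) ^ (2:ℝ) := by
        rw [show (2:ℝ) = ((2:ℕ):ℝ) by norm_num, Real.rpow_natCast]; ring
      rw [h1, h2, ← Real.rpow_add hx0]; ring_nf
    have step2 : (2 * (i:ℝ)) * (i:ℝ) * (ς * (p * (i:ℝ) ^ (-(p + 1)))) * (ς * (i:ℝ) ^ (-p))
        = 2 * p * ς ^ 2 * (i:ℝ) ^ (1 - 2 * p) := by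
      rw [← hxpow]; ring
    have step3 : (i:ℝ) ^ (1 - 2 * p) ≤ (t:ℝ) ^ (1 - 2 * p) :=
      Real.rpow_le_rpow hx0.le (by exact_mod_cast hit) h2p
    calc ((i : ℝ) + 1) * (i : ℝ) * (σ (i - 1) - σ i) * σ i
        ≤ 2 * p * ς ^ 2 * (i:ℝ) ^ (1 - 2 * p) := by rw [← step2]; exact step1
      _ ≤ 2 * p * ς ^ 2 * (t:ℝ) ^ (1 - 2 * p) := by gcongr
  calc ∑ i ∈ Finset.Icc 1 t, ((i : ℝ) + 1) * (i : ℝ) * (σ (i - 1) - σ i) * σ i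
      ≤ ∑ _i ∈ Finset.Icc 1 t, 2 * p * ς ^ 2 * (t:ℝ) ^ (1 - 2 * p) :=
        Finset.sum_le_sum hbound
    _ = (t:ℝ) * (2 * p * ς ^ 2 * (t:ℝ) ^ (1 - 2 * p)) := by
        rw [Finset.sum_const, Nat.card_Icc]; simp [nsmul_eq_mul]
    _ = 2 * p * ς ^ 2 * (t : ℝ) ^ (2 * (1 - p)) := by
        rw [show 2 * (1 - p) = 1 + (1 - 2 * p) by ring, Real.rpow_add ht0, Real.rpow_one]
        ring
end

section
/- Let (σ_t)_{t≥0} be positive, nonincreasing with lim_{t→∞} t·(σ_t/σ_{t+1} − 1) = L where 0 ≤ L < 2. Then lim_{t→∞} (∑_{i=1}^{t} (i+1)·i·(σ_{i-1} − σ_i)) / ((t+1)·t·σ_t) = L/(2−L), provided (t+1)t σ_t is strictly increasing and diverges to ∞. -/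
open Filter Asymptotics

/-- Stolz–Cesàro theorem. -/
theorem stolz_cesaro (a b : ℕ → ℝ) (c : ℝ) (hb : StrictMono b)
    (hdiv : Tendsto b atTop atTop)
    (h : Tendsto (fun n => (a (n + 1) - a n) / (b (n + 1) - b n)) atTop (nhds c)) :
    Tendsto (fun n => a n / b n) atTop (nhds c) := by
  have hΔb : ∀ n, 0 < b (n + 1) - b n := fun n => sub_pos.2 (hb (Nat.lt_succ_self n))
  -- Δa - c Δb = o(Δb)
  have h1 : (fun n => (a (n + 1) - a n) - c * (b (n + 1) - b n)) =o[atTop]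
      (fun n => b (n + 1) - b n) := by
    rw [isLittleO_iff_tendsto fun n hn => absurd hn (hΔb n).ne']
    have h' := h.sub_const c
    rw [sub_self] at h'
    refine h'.congr fun n => ?_
    have hne := (hΔb n).ne'
    field_simp
  -- sums
  have h2 : (fun n => ∑ i ∈ Finset.range n, ((a (i + 1) - a i) - c * (b (i + 1) - b i)))
      =o[atTop] (fun n => ∑ i ∈ Finset.range n, (b (i + 1) - b i)) := by
    refine h1.sum_range (fun i => (hΔb i).le) ?_
    refine (tendsto_atTop_add_const_right atTop (-(b 0)) hdiv).congr fun n => ?_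
    rw [Finset.sum_range_sub]; ring
  have h3 : (fun n => (a n - a 0) - c * (b n - b 0)) =o[atTop] (fun n => b n - b 0) := by
    refine (h2.congr (fun n => ?_) (fun n => ?_))
    · rw [Finset.sum_sub_distrib, Finset.sum_range_sub, ← Finset.mul_sum,
        Finset.sum_range_sub]
    · exact Finset.sum_range_sub b n
  -- b n - b 0 = O(b n)
  have hbig : (fun n => b n - b 0) =O[atTop] b := by
    rw [isBigO_iff]
    refine ⟨2, ?_⟩
    filter_upwards [hdiv.eventually_ge_atTop (|b 0| + 1)] with n hn
    have h0 : 0 < b n := lt_of_lt_of_le (by positivity) hn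
    have hb0n : |b 0| ≤ b n := le_trans (by linarith) hn
    have h1' : b 0 ≤ b n := le_trans (le_abs_self _) hb0n
    have h2' : -b 0 ≤ b n := le_trans (neg_le_abs _) hb0n
    rw [Real.norm_eq_abs, Real.norm_eq_abs, abs_of_pos h0,
      abs_of_nonneg (sub_nonneg.2 h1')]
    linarith
  have h4 : (fun n => a n - c * b n) =o[atTop] b := by
    have hnorm : Tendsto (fun n => ‖b n‖) atTop atTop := by
      simpa [Real.norm_eq_abs, Function.comp_def] using tendsto_abs_atTop_atTop.comp hdiv
    have hconst : (fun _ : ℕ => a 0 - c * b 0) =o[atTop] b :=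
      isLittleO_const_left.2 (Or.inr hnorm)
    have := (h3.trans_isBigO hbig).add hconst
    refine this.congr_left fun n => by ring
  have h5 : Tendsto (fun n => (a n - c * b n) / b n) atTop (nhds 0) :=
    h4.tendsto_div_nhds_zero
  have h6 := h5.add_const c
  rw [zero_add] at h6
  refine h6.congr' ?_
  filter_upwards [hdiv.eventually_gt_atTop 0] with n hn
  field_simp
  ring

theorem stmt_10 (σ : ℕ → ℝ) (L : ℝ)
    (hpos : ∀ t, 0 < σ t)
    (hmono : ∀ t, σ (t + 1) ≤ σ t)
    (hlim : Tendsto (fun t : ℕ => (t : ℝ) * (σ t / σ (t + 1) - 1)) atTop (nhds L))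
    (hL0 : 0 ≤ L) (hL2 : L < 2)
    (hinc : StrictMono (fun t : ℕ => ((t : ℝ) + 1) * (t : ℝ) * σ t))
    (hdiv : Tendsto (fun t : ℕ => ((t : ℝ) + 1) * (t : ℝ) * σ t) atTop atTop) :
    Tendsto (fun t : ℕ =>
        (∑ i ∈ Finset.Icc 1 t, ((i : ℝ) + 1) * (i : ℝ) * (σ (i - 1) - σ i))
          / (((t : ℝ) + 1) * (t : ℝ) * σ t)) atTop (nhds (L / (2 - L))) := by
  set a : ℕ → ℝ := fun t => ∑ i ∈ Finset.Icc 1 t, ((i : ℝ) + 1) * (i : ℝ) * (σ (i - 1) - σ i)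
    with ha
  set b : ℕ → ℝ := fun t => ((t : ℝ) + 1) * (t : ℝ) * σ t with hb
  apply stolz_cesaro a b _ hinc hdiv
  -- ratio of differences tends to L/(2-L)
  have hu : Tendsto (fun t : ℕ => (t : ℝ) * (σ t / σ (t + 1) - 1)) atTop (nhds L) := hlim
  have hcoef : Tendsto (fun t : ℕ => (1 + 2 / (t : ℝ))) atTop (nhds 1) := by
    have : Tendsto (fun t : ℕ => 2 / (t : ℝ)) atTop (nhds 0) :=
      tendsto_const_nhds.div_atTop tendsto_natCast_atTop_atTop
    simpa using (tendsto_const_nhds.add this : Tendsto (fun t : ℕ => 1 + 2 / (t : ℝ)) atTop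
      (nhds (1 + 0)))
  have hnum : Tendsto (fun t : ℕ => (1 + 2 / (t : ℝ)) * ((t : ℝ) * (σ t / σ (t + 1) - 1)))
      atTop (nhds L) := by simpa using hcoef.mul hu
  have hden : Tendsto (fun t : ℕ => 2 - (t : ℝ) * (σ t / σ (t + 1) - 1)) atTop
      (nhds (2 - L)) := tendsto_const_nhds.sub hu
  have hmain := hnum.div hden (by linarith : (2 : ℝ) - L ≠ 0)
  refine hmain.congr' ?_
  filter_upwards [eventually_ge_atTop 1] with t ht
  have ht0 : (t : ℝ) ≠ 0 := Nat.cast_ne_zero.2 (by omega)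
  have hs' : σ (t + 1) ≠ 0 := (hpos (t + 1)).ne'
  -- compute the differences
  have hΔa : a (t + 1) - a t = ((t : ℝ) + 2) * ((t : ℝ) + 1) * (σ t - σ (t + 1)) := by
    show (∑ i ∈ Finset.Icc 1 (t + 1), ((i : ℝ) + 1) * (i : ℝ) * (σ (i - 1) - σ i))
        - (∑ i ∈ Finset.Icc 1 t, ((i : ℝ) + 1) * (i : ℝ) * (σ (i - 1) - σ i)) = _
    rw [Finset.sum_Icc_succ_top (by omega : 1 ≤ t + 1)]
    push_cast
    ring
  have hΔb : b (t + 1) - b t =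
      ((t : ℝ) + 1) * ((((t : ℝ) + 2) * σ (t + 1) - (t : ℝ) * σ t)) := by
    show (((t + 1 : ℕ) : ℝ) + 1) * ((t + 1 : ℕ) : ℝ) * σ (t + 1) - ((t : ℝ) + 1) * (t : ℝ) * σ t
        = ((t : ℝ) + 1) * ((((t : ℝ) + 2) * σ (t + 1) - (t : ℝ) * σ t))
    push_cast
    ring
  rw [hΔa, hΔb]
  set B : ℝ := ((t : ℝ) + 2) * σ (t + 1) - (t : ℝ) * σ t with hB
  have e1 : ((t : ℝ) + 2) * ((t : ℝ) + 1) * (σ t - σ (t + 1)) / (((t : ℝ) + 1) * B)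
      = ((t : ℝ) + 2) * (σ t - σ (t + 1)) / B := by
    rw [show ((t : ℝ) + 2) * ((t : ℝ) + 1) * (σ t - σ (t + 1))
        = ((t : ℝ) + 1) * (((t : ℝ) + 2) * (σ t - σ (t + 1))) by ring,
      mul_div_mul_left _ _ (by positivity : ((t : ℝ) + 1) ≠ 0)]
  rw [e1]
  have e2 : (1 + 2 / (t : ℝ)) * ((t : ℝ) * (σ t / σ (t + 1) - 1))
      = ((t : ℝ) + 2) * (σ t - σ (t + 1)) / σ (t + 1) := by
    field_simp
  have e3 : 2 - (t : ℝ) * (σ t / σ (t + 1) - 1) = B / σ (t + 1) := by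
    rw [hB]; field_simp; ring
  simp only [Pi.div_apply]
  rw [e2, e3]
  rcases eq_or_ne B 0 with hB0 | hB0
  · simp [hB0]
  · rw [div_div_div_cancel_right₀ hs']
end

section
/- Let (σ_t)_{t≥0} be positive, nonincreasing with lim_{t→∞} t·(σ_t/σ_{t+1} − 1) = L for some L ∈ [0,1), and suppose (t+1)·t·σ_t² is strictly increasing and diverges. Then lim_{t→∞} (∑_{i=1}^{t}(i+1)·i·(σ_{i-1} − σ_i)·σ_i) / ((t+1)·t·σ_t²) = L/(2(1−L)). -/
open Filter

/-- Stolz–Cesàro theorem (the ∙/∞ case). -/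
lemma stolz_aux {a b : ℕ → ℝ} {l : ℝ} (hb : ∀ n, b n < b (n + 1))
    (hbdiv : Tendsto b atTop atTop)
    (h : Tendsto (fun n => (a (n + 1) - a n) / (b (n + 1) - b n)) atTop (nhds l)) :
    Tendsto (fun n => a n / b n) atTop (nhds l) := by
  rw [Metric.tendsto_atTop] at h ⊢
  intro ε hε
  obtain ⟨N, hN⟩ := h (ε / 2) (by positivity)
  have hd : ∀ n, N ≤ n → |a n - l * b n - (a N - l * b N)| ≤ ε / 2 * (b n - b N) := by
    intro n hn
    induction n, hn using Nat.le_induction with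
    | base => simp
    | succ n hn ih =>
      have h1 : (0:ℝ) < b (n + 1) - b n := sub_pos.2 (hb n)
      have h2 : |(a (n + 1) - a n) / (b (n + 1) - b n) - l| < ε / 2 := by
        simpa [Real.dist_eq] using hN n hn
      have h3 : |(a (n + 1) - a n) - l * (b (n + 1) - b n)| ≤ ε / 2 * (b (n + 1) - b n) := by
        have heq : (a (n + 1) - a n) - l * (b (n + 1) - b n)
            = ((a (n + 1) - a n) / (b (n + 1) - b n) - l) * (b (n + 1) - b n) := by
          field_simp
        rw [heq, abs_mul, abs_of_pos h1]
        exact mul_le_mul_of_nonneg_right h2.le h1.le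
      calc |a (n + 1) - l * b (n + 1) - (a N - l * b N)|
          = |((a (n + 1) - a n) - l * (b (n + 1) - b n))
              + (a n - l * b n - (a N - l * b N))| := by ring_nf
        _ ≤ |(a (n + 1) - a n) - l * (b (n + 1) - b n)|
              + |a n - l * b n - (a N - l * b N)| := abs_add_le _ _
        _ ≤ ε / 2 * (b (n + 1) - b n) + ε / 2 * (b n - b N) := add_le_add h3 ih
        _ = ε / 2 * (b (n + 1) - b N) := by ring
  set C : ℝ := |a N - l * b N| + ε / 2 * |b N| with hC
  have hC0 : 0 ≤ C := by rw [hC]; positivity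
  clear_value C
  have hbound : ∀ n, N ≤ n → |a n - l * b n| ≤ C + ε / 2 * b n := by
    intro n hn
    rw [hC]
    have h4 := hd n hn
    have h5 : |a n - l * b n| ≤ |a N - l * b N| + |a n - l * b n - (a N - l * b N)| := by
      have h5' := abs_add_le (a N - l * b N) (a n - l * b n - (a N - l * b N))
      have h5'' : (a N - l * b N) + (a n - l * b n - (a N - l * b N)) = a n - l * b n := by ring
      rw [h5''] at h5'
      exact h5'
    have h6 : -|b N| ≤ b N := neg_abs_le _
    nlinarith
  obtain ⟨N₂, hN₂⟩ := eventually_atTop.mp (hbdiv.eventually_ge_atTop (max (4 * (C + 1) / ε) 1))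
  refine ⟨max N N₂, fun n hn => ?_⟩
  have hnN : N ≤ n := le_trans (le_max_left _ _) hn
  have hbn := hN₂ n (le_trans (le_max_right _ _) hn)
  have hbn1 : (1:ℝ) ≤ b n := le_trans (le_max_right _ _) hbn
  have hbnC : 4 * (C + 1) / ε ≤ b n := le_trans (le_max_left _ _) hbn
  have hbnpos : (0:ℝ) < b n := lt_of_lt_of_le one_pos hbn1
  have key : |a n / b n - l| < ε := by
    have heq : a n / b n - l = (a n - l * b n) / b n := by
      field_simp
    rw [heq, abs_div, abs_of_pos hbnpos]
    have h7 : |a n - l * b n| ≤ C + ε / 2 * b n := hbound n hnN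
    rw [div_lt_iff₀ hbnpos]
    have h8 : C < ε / 2 * b n := by
      have : 4 * (C + 1) ≤ ε * b n := by
        rw [div_le_iff₀ hε] at hbnC
        linarith [mul_comm (b n) ε]
      nlinarith [hC0, hε.le, hbnpos]
    nlinarith [h7, h8]
  simpa [Real.dist_eq] using key

theorem stmt_11 (σ : ℕ → ℝ) (L : ℝ)
    (hpos : ∀ t, 0 < σ t)
    (hmono : ∀ t, σ (t + 1) ≤ σ t)
    (hlim : Tendsto (fun t : ℕ => (t : ℝ) * (σ t / σ (t + 1) - 1)) atTop (nhds L))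
    (hL0 : 0 ≤ L) (hL1 : L < 1)
    (hinc : StrictMono (fun t : ℕ => ((t : ℝ) + 1) * (t : ℝ) * σ t ^ 2))
    (hdiv : Tendsto (fun t : ℕ => ((t : ℝ) + 1) * (t : ℝ) * σ t ^ 2) atTop atTop) :
    Tendsto (fun t : ℕ =>
        (∑ i ∈ Finset.Icc 1 t, ((i : ℝ) + 1) * (i : ℝ) * (σ (i - 1) - σ i) * σ i)
          / (((t : ℝ) + 1) * (t : ℝ) * σ t ^ 2)) atTop (nhds (L / (2 * (1 - L)))) := by
  set a : ℕ → ℝ := fun t => ∑ i ∈ Finset.Icc 1 t, ((i : ℝ) + 1) * (i : ℝ) * (σ (i - 1) - σ i) * σ i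
  set b : ℕ → ℝ := fun t => ((t : ℝ) + 1) * (t : ℝ) * σ t ^ 2
  have hb : ∀ n, b n < b (n + 1) := fun n => hinc (Nat.lt_succ_self n)
  -- r n := σ n / σ (n+1)
  set r : ℕ → ℝ := fun n => σ n / σ (n + 1) with hr
  have hrlim : Tendsto (fun n : ℕ => (n : ℝ) * (r n - 1)) atTop (nhds L) := hlim
  have hr1 : Tendsto r atTop (nhds 1) := by
    have h0 : Tendsto (fun n : ℕ => (n : ℝ)⁻¹) atTop (nhds 0) := tendsto_inv_atTop_nhds_zero_nat
    have hmul : Tendsto (fun n : ℕ => ((n : ℝ) * (r n - 1)) * (n : ℝ)⁻¹) atTop (nhds (L * 0)) :=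
      hrlim.mul h0
    rw [mul_zero] at hmul
    have heq : ∀ᶠ n : ℕ in atTop, ((n : ℝ) * (r n - 1)) * (n : ℝ)⁻¹ = r n - 1 := by
      filter_upwards [eventually_ge_atTop 1] with n hn
      have : (n : ℝ) ≠ 0 := by positivity
      field_simp
    have := (Tendsto.congr' heq hmul)
    have : Tendsto (fun n => (r n - 1) + 1) atTop (nhds (0 + 1)) := this.add tendsto_const_nhds
    simpa using this
  -- limit of the difference quotient
  have hquot : Tendsto (fun n => (a (n + 1) - a n) / (b (n + 1) - b n)) atTop
      (nhds (L / (2 * (1 - L)))) := by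
    have hnum : Tendsto (fun n : ℕ => ((n : ℝ) + 2) * (r n - 1)) atTop (nhds L) := by
      have : Tendsto (fun n : ℕ => (n : ℝ) * (r n - 1) + 2 * (r n - 1)) atTop
          (nhds (L + 2 * 0)) := by
        refine hrlim.add (Tendsto.const_mul 2 ?_)
        have h9 : Tendsto (fun k => r k - 1) atTop (nhds (1 - 1)) :=
          hr1.sub tendsto_const_nhds
        simpa using h9
      simpa [add_mul, mul_comm, mul_left_comm] using
        this.congr (fun n => by ring)
    have hden : Tendsto (fun n : ℕ => 2 - ((n : ℝ) * (r n - 1)) * (r n + 1)) atTop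
        (nhds (2 * (1 - L))) := by
      have := (tendsto_const_nhds :
          Tendsto (fun _ : ℕ => (2:ℝ)) atTop (nhds 2)).sub
        (hrlim.mul (hr1.add (tendsto_const_nhds :
          Tendsto (fun _ : ℕ => (1:ℝ)) atTop (nhds 1))))
      have h2 : (2 : ℝ) - L * (1 + 1) = 2 * (1 - L) := by ring
      rw [h2] at this
      exact this
    have hden' : (2 : ℝ) * (1 - L) ≠ 0 := by
      have : (0:ℝ) < 1 - L := by linarith
      positivity
    have hdiv2 : Tendsto (fun n : ℕ =>
        (((n : ℝ) + 2) * (r n - 1)) / (2 - ((n : ℝ) * (r n - 1)) * (r n + 1))) atTop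
        (nhds (L / (2 * (1 - L)))) := hnum.div hden hden'
    refine hdiv2.congr' ?_
    filter_upwards [eventually_ge_atTop 0] with n _
    -- rewrite the difference quotient
    have hσ : σ (n + 1) ≠ 0 := (hpos (n + 1)).ne'
    have hc : ((n : ℝ) + 1) * σ (n + 1) ^ 2 ≠ 0 := by positivity
    have hA : a (n + 1) - a n
        = (((n : ℝ) + 1) * σ (n + 1) ^ 2) * (((n : ℝ) + 2) * (r n - 1)) := by
      have hsum : a (n + 1) = a n + (((n + 1 : ℕ) : ℝ) + 1) * ((n + 1 : ℕ) : ℝ)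
          * (σ ((n + 1) - 1) - σ (n + 1)) * σ (n + 1) := by
        simp only [a]
        rw [Finset.sum_Icc_succ_top (by omega : 1 ≤ n + 1)]
      rw [hsum]
      simp only [Nat.add_sub_cancel, hr]
      push_cast
      field_simp
      ring
    have hB : b (n + 1) - b n
        = (((n : ℝ) + 1) * σ (n + 1) ^ 2) * (2 - ((n : ℝ) * (r n - 1)) * (r n + 1)) := by
      simp only [b, hr]
      push_cast
      field_simp
      ring
    rw [hA, hB, mul_div_mul_left _ _ hc]
  exact stolz_aux hb hdiv hquot
end

section
/- Let Φ : ℝ^d → ℝ be convex and M-smooth on a convex compact set X of diameter D, let x ∈ X, let g ∈ ℝ^d be arbitrary, let v ∈ argmin_{u ∈ X} g^T u, let x⁺ = x + α(v − x) with α ∈ [0,1], and let x* ∈ X. Then Φ(x⁺) − Φ(x*) ≤ (1−α)(Φ(x) − Φ(x*)) + M·D²·α²/2 + 2·α·D·‖∇Φ(x) − g‖. -/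
open InnerProductSpace Set intervalIntegral

variable {E : Type*} [NormedAddCommGroup E] [InnerProductSpace ℝ E] [CompleteSpace E]

lemma line_hasDerivAt (Φ : E → ℝ) (Φ' : E → E) (x y : E) (t : ℝ)
    (hg : HasGradientAt Φ (Φ' (x + t • (y - x))) (x + t • (y - x))) :
    HasDerivAt (fun s : ℝ => Φ (x + s • (y - x)))
      (inner ℝ (Φ' (x + t • (y - x))) (y - x) : ℝ) t := by
  have hL : HasDerivAt (fun s : ℝ => x + s • (y - x)) (y - x) t := by
    simpa using ((hasDerivAt_id t).smul_const (y - x)).const_add x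
  have := hg.hasFDerivAt.comp_hasDerivAt t hL
  simp [toDual_apply_apply] at this
  exact this

lemma grad_ineq (X : Set E) (Φ : E → ℝ) (Φ' : E → E)
    (hconv : ConvexOn ℝ X Φ) (x y : E) (hx : x ∈ X) (hy : y ∈ X)
    (hg : HasGradientAt Φ (Φ' x) x) :
    (inner ℝ (Φ' x) (y - x) : ℝ) ≤ Φ y - Φ x := by
  have hd : HasDerivAt (fun s : ℝ => Φ (x + s • (y - x)))
      (inner ℝ (Φ' x) (y - x) : ℝ) 0 := by
    have := line_hasDerivAt Φ Φ' x y 0 (by simpa using hg)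
    simpa using this
  have htend := hasDerivAt_iff_tendsto_slope.mp hd
  have htend' : Filter.Tendsto (slope (fun s : ℝ => Φ (x + s • (y - x))) 0)
      (nhdsWithin 0 (Ioi 0)) (nhds (inner ℝ (Φ' x) (y - x) : ℝ)) :=
    htend.mono_left (nhdsWithin_mono 0 (fun t ht => ne_of_gt ht))
  refine le_of_tendsto htend' ?_
  filter_upwards [Ioc_mem_nhdsGT_of_mem (by simp : (0:ℝ) ∈ Ico 0 1)] with t ht
  have ht0 : 0 < t := ht.1
  have ht1 : t ≤ 1 := ht.2
  have hmem : x + t • (y - x) = (1 - t) • x + t • y := by module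
  have hΦ : Φ (x + t • (y - x)) ≤ (1 - t) * Φ x + t * Φ y := by
    rw [hmem]
    exact hconv.2 hx hy (by linarith) ht0.le (by ring)
  rw [slope_def_field]
  have hq : Φ (x + t • (y - x)) - Φ (x + (0:ℝ) • (y - x)) ≤ t * (Φ y - Φ x) := by
    simpa using by linarith [hΦ]
  rw [sub_zero, div_le_iff₀ ht0]
  linarith [hq]

lemma descent_lemma (X : Set E) (hXconv : Convex ℝ X) (Φ : E → ℝ) (Φ' : E → E)
    (M : ℝ) (hM : 0 ≤ M)
    (hgrad : ∀ z ∈ X, HasGradientAt Φ (Φ' z) z)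
    (hlip : ∀ y ∈ X, ∀ z ∈ X, ‖Φ' y - Φ' z‖ ≤ M * ‖y - z‖)
    (x y : E) (hx : x ∈ X) (hy : y ∈ X) :
    Φ y ≤ Φ x + inner ℝ (Φ' x) (y - x) + M / 2 * ‖y - x‖ ^ 2 := by
  set L : ℝ → E := fun t => x + t • (y - x) with hL
  have hmem : ∀ t ∈ Icc (0:ℝ) 1, L t ∈ X := by
    intro t ht
    have : L t = (1 - t) • x + t • y := by simp [hL]; module
    rw [this]
    exact hXconv hx hy (by linarith [ht.2]) ht.1 (by ring)
  have hderiv : ∀ t ∈ Icc (0:ℝ) 1,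
      HasDerivAt (fun s : ℝ => Φ (L s)) (inner ℝ (Φ' (L t)) (y - x) : ℝ) t :=
    fun t ht => line_hasDerivAt Φ Φ' x y t (hgrad _ (hmem t ht))
  -- continuity of the integrand
  have hcont : ContinuousOn (fun t : ℝ => (inner ℝ (Φ' (L t)) (y - x) : ℝ)) (Icc 0 1) := by
    have hlipL : LipschitzOnWith (Real.toNNReal (M * ‖y - x‖)) (fun t => Φ' (L t)) (Icc 0 1) := by
      rw [lipschitzOnWith_iff_dist_le_mul]
      intro s hs t ht
      rw [dist_eq_norm, dist_eq_norm]
      calc ‖Φ' (L s) - Φ' (L t)‖ ≤ M * ‖L s - L t‖ :=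
            hlip _ (hmem s hs) _ (hmem t ht)
        _ = M * ‖y - x‖ * |s - t| := by
            have : L s - L t = (s - t) • (y - x) := by simp [hL]; module
            rw [this, norm_smul, Real.norm_eq_abs]; ring
        _ = ↑(Real.toNNReal (M * ‖y - x‖)) * ‖s - t‖ := by
            rw [Real.coe_toNNReal _ (by positivity), Real.norm_eq_abs]
    exact (continuous_inner.comp_continuousOn
      (hlipL.continuousOn.prodMk continuousOn_const))
  have hint : IntervalIntegrable (fun t : ℝ => (inner ℝ (Φ' (L t)) (y - x) : ℝ))
      MeasureTheory.volume 0 1 := by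
    apply ContinuousOn.intervalIntegrable
    rwa [uIcc_of_le (by norm_num : (0:ℝ) ≤ 1)]
  have hftc : ∫ t in (0:ℝ)..1, (inner ℝ (Φ' (L t)) (y - x) : ℝ)
      = Φ (L 1) - Φ (L 0) := by
    refine intervalIntegral.integral_eq_sub_of_hasDerivAt (f := fun s => Φ (L s)) ?_ hint
    intro t ht
    rw [uIcc_of_le (by norm_num : (0:ℝ) ≤ 1)] at ht
    exact hderiv t ht
  have hbound : ∀ t ∈ Icc (0:ℝ) 1,
      (inner ℝ (Φ' (L t)) (y - x) : ℝ)
        ≤ (inner ℝ (Φ' x) (y - x) : ℝ) + M * ‖y - x‖ ^ 2 * t := by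
    intro t ht
    have h1 : (inner ℝ (Φ' (L t)) (y - x) : ℝ) - (inner ℝ (Φ' x) (y - x) : ℝ)
        = (inner ℝ (Φ' (L t) - Φ' x) (y - x) : ℝ) := by
      rw [inner_sub_left]
    have h2 : (inner ℝ (Φ' (L t) - Φ' x) (y - x) : ℝ) ≤ ‖Φ' (L t) - Φ' x‖ * ‖y - x‖ :=
      real_inner_le_norm _ _
    have h3 : ‖Φ' (L t) - Φ' x‖ ≤ M * (t * ‖y - x‖) := by
      have := hlip _ (hmem t ht) _ hx
      have hnorm : ‖L t - x‖ = t * ‖y - x‖ := by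
        have : L t - x = t • (y - x) := by simp [hL]
        rw [this, norm_smul, Real.norm_eq_abs, abs_of_nonneg ht.1]
      rwa [hnorm] at this
    nlinarith [norm_nonneg (y - x)]
  have hintR : IntervalIntegrable
      (fun t : ℝ => (inner ℝ (Φ' x) (y - x) : ℝ) + M * ‖y - x‖ ^ 2 * t)
      MeasureTheory.volume 0 1 := by
    apply Continuous.intervalIntegrable; continuity
  have hmono := intervalIntegral.integral_mono_on (by norm_num : (0:ℝ) ≤ 1) hint hintR
    (fun t ht => hbound t ht)
  have hRval : ∫ t in (0:ℝ)..1, ((inner ℝ (Φ' x) (y - x) : ℝ) + M * ‖y - x‖ ^ 2 * t)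
      = (inner ℝ (Φ' x) (y - x) : ℝ) + M / 2 * ‖y - x‖ ^ 2 := by
    rw [intervalIntegral.integral_add (by apply Continuous.intervalIntegrable; continuity)
      (by apply Continuous.intervalIntegrable; continuity)]
    rw [intervalIntegral.integral_const]
    rw [intervalIntegral.integral_const_mul, integral_id]
    simp [smul_eq_mul]; ring
  have hL0 : L 0 = x := by simp [hL]
  have hL1 : L 1 = y := by simp [hL]
  rw [hftc, hRval, hL0, hL1] at hmono
  linarith [hmono]

theorem stmt_13 {d : ℕ} (X : Set (EuclideanSpace ℝ (Fin d)))
    (Φ : EuclideanSpace ℝ (Fin d) → ℝ) (Φ' : EuclideanSpace ℝ (Fin d) → EuclideanSpace ℝ (Fin d))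
    (M D α : ℝ) (hM : 0 ≤ M) (hD : 0 ≤ D)
    (hXconv : Convex ℝ X) (hXcomp : IsCompact X)
    (hdiam : ∀ y ∈ X, ∀ z ∈ X, ‖y - z‖ ≤ D)
    (hconv : ConvexOn ℝ X Φ)
    (hgrad : ∀ x ∈ X, HasGradientAt Φ (Φ' x) x)
    (hlip : ∀ y ∈ X, ∀ z ∈ X, ‖Φ' y - Φ' z‖ ≤ M * ‖y - z‖)
    (x xstar v : EuclideanSpace ℝ (Fin d)) (g : EuclideanSpace ℝ (Fin d))
    (hx : x ∈ X) (hxstar : xstar ∈ X) (hv : v ∈ X)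
    (hvmin : ∀ u ∈ X, inner ℝ g v ≤ (inner ℝ g u : ℝ))
    (hα0 : 0 ≤ α) (hα1 : α ≤ 1) :
    Φ (x + α • (v - x)) - Φ xstar
      ≤ (1 - α) * (Φ x - Φ xstar) + M * D ^ 2 * α ^ 2 / 2 + 2 * α * D * ‖Φ' x - g‖ := by
  set xp := x + α • (v - x) with hxp
  have hxpX : xp ∈ X := by
    have : xp = (1 - α) • x + α • v := by rw [hxp]; module
    rw [this]
    exact hXconv hx hv (by linarith) hα0 (by ring)
  set c := ‖Φ' x - g‖ with hc
  have hc0 : 0 ≤ c := norm_nonneg _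
  have hvD : ‖v - x‖ ≤ D := hdiam v hv x hx
  have hsD : ‖xstar - x‖ ≤ D := hdiam xstar hxstar x hx
  -- descent lemma
  have hdesc := descent_lemma X hXconv Φ Φ' M hM hgrad hlip x xp hx hxpX
  have hxpx : xp - x = α • (v - x) := by rw [hxp]; abel
  have hiner : (inner ℝ (Φ' x) (xp - x) : ℝ) = α * inner ℝ (Φ' x) (v - x) := by
    rw [hxpx, real_inner_smul_right]
  have hnorm2 : ‖xp - x‖ ^ 2 ≤ α ^ 2 * D ^ 2 := by
    rw [hxpx, norm_smul, Real.norm_eq_abs, abs_of_nonneg hα0]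
    have h1 := mul_self_le_mul_self (norm_nonneg (v - x)) hvD
    nlinarith [sq_nonneg α]
  -- bound on inner ℝ (Φ' x) (v - x)
  have hsplit1 : (inner ℝ (Φ' x) (v - x) : ℝ)
      = inner ℝ g (v - x) + inner ℝ (Φ' x - g) (v - x) := by
    rw [inner_sub_left]; ring
  have hgvx : (inner ℝ g (v - x) : ℝ) ≤ inner ℝ g (xstar - x) := by
    rw [inner_sub_right, inner_sub_right]
    have := hvmin xstar hxstar
    linarith
  have hsplit2 : (inner ℝ g (xstar - x) : ℝ)
      = inner ℝ (Φ' x) (xstar - x) - inner ℝ (Φ' x - g) (xstar - x) := by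
    rw [inner_sub_left]; ring
  have hgi := grad_ineq X Φ Φ' hconv x xstar hx hxstar (hgrad x hx)
  have hb1 : (inner ℝ (Φ' x - g) (v - x) : ℝ) ≤ c * D := by
    calc (inner ℝ (Φ' x - g) (v - x) : ℝ) ≤ ‖Φ' x - g‖ * ‖v - x‖ := real_inner_le_norm _ _
      _ ≤ c * D := by apply mul_le_mul_of_nonneg_left hvD hc0
  have hb2 : -(inner ℝ (Φ' x - g) (xstar - x) : ℝ) ≤ c * D := by
    calc -(inner ℝ (Φ' x - g) (xstar - x) : ℝ)
        = inner ℝ (Φ' x - g) (x - xstar) := by rw [← inner_neg_right]; congr 1; abel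
      _ ≤ ‖Φ' x - g‖ * ‖x - xstar‖ := real_inner_le_norm _ _
      _ ≤ c * D := by
          apply mul_le_mul_of_nonneg_left _ hc0
          rw [show x - xstar = -(xstar - x) by abel, norm_neg]; exact hsD
  have hkey : (inner ℝ (Φ' x) (v - x) : ℝ) ≤ Φ xstar - Φ x + 2 * c * D := by
    rw [hsplit1]
    have := hgvx
    rw [hsplit2] at this
    linarith
  have hmul : α * (inner ℝ (Φ' x) (v - x) : ℝ) ≤ α * (Φ xstar - Φ x + 2 * c * D) :=
    mul_le_mul_of_nonneg_left hkey hα0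
  have : Φ xp ≤ Φ x + α * (Φ xstar - Φ x + 2 * c * D) + M / 2 * (α ^ 2 * D ^ 2) := by
    rw [hiner] at hdesc
    nlinarith [hnorm2]
  nlinarith [this]
end
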